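/- Let λ_i = (1, z_i) and λ̃_i ∈ ℂ² for i = 1, 2, 3, 4 satisfy momentum conservation Σ_{i=1}^4 λ_i ⊗ λ̃_i = 0, with all ⟨ij⟩ nonzero. Then the numerator [24]⟨12⟩⟨14⟩ is antisymmetric under transpositions of the indices 2, 3, 4; i.e. [24]⟨12⟩⟨14⟩ = -[23]⟨12⟩⟨13⟩, and similarly for the other transpositions. Consequently the expression [24]⟨12⟩⟨14⟩/(⟨24⟩⟨23⟩⟨34⟩) is invariant under all permutations of {2,3,4}. -/

import Mathlib

open scoped BigOperators

/-- Square bracket `[ij] = λ̃_i^1 λ̃_j^2 - λ̃_i^2 λ̃_j^1 = det(λ̃_i, λ̃_j)`. -/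
def sqb (a b : Fin 2 → ℂ) : ℂ := a 0 * b 1 - a 1 * b 0

lemma ratio_case (z : Fin 4 → ℂ) (lt : Fin 4 → Fin 2 → ℂ)
    (hkey : ∀ β : Fin 2, (z 1 - z 0) * lt 1 β + (z 2 - z 0) * lt 2 β
      + (z 3 - z 0) * lt 3 β = 0)
    (n12 : z 1 - z 2 ≠ 0) (n13 : z 1 - z 3 ≠ 0) (n23 : z 2 - z 3 ≠ 0)
    (a b c : Fin 3) (hab : a ≠ b) (hac : a ≠ c) (hbc : b ≠ c) :
    sqb (lt a.succ) (lt c.succ) * (z 0 - z a.succ) * (z 0 - z c.succ)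
      / ((z a.succ - z c.succ) * (z a.succ - z b.succ) * (z b.succ - z c.succ))
    = sqb (lt 1) (lt 3) * (z 0 - z 1) * (z 0 - z 3)
      / ((z 1 - z 3) * (z 1 - z 2) * (z 2 - z 3)) := by
  have n21 : z 2 - z 1 ≠ 0 := fun h => n12 (by linear_combination -h)
  have n31 : z 3 - z 1 ≠ 0 := fun h => n13 (by linear_combination -h)
  have n32 : z 3 - z 2 ≠ 0 := fun h => n23 (by linear_combination -h)
  fin_cases a <;> fin_cases b <;> fin_cases c <;> simp_all [-Fin.forall_fin_two]
  · rw [div_eq_div_iff (mul_ne_zero (mul_ne_zero n12 n13) n32)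
      (mul_ne_zero (mul_ne_zero n13 n12) n23)]
    simp only [sqb]
    linear_combination ((z 1 - z 3)*(z 1 - z 2)*(z 2 - z 3)) *
      (((z 1 - z 0)*lt 1 0)*hkey 1 - ((z 1 - z 0)*lt 1 1)*hkey 0)
  · rw [div_eq_div_iff (mul_ne_zero (mul_ne_zero n23 n21) n13)
      (mul_ne_zero (mul_ne_zero n13 n12) n23)]
    simp only [sqb]
    linear_combination ((z 1 - z 3)*(z 1 - z 2)*(z 2 - z 3)) *
      (((z 3 - z 0)*lt 3 1)*hkey 0 - ((z 3 - z 0)*lt 3 0)*hkey 1)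
  · rw [div_eq_div_iff (mul_ne_zero (mul_ne_zero n21 n23) n31)
      (mul_ne_zero (mul_ne_zero n13 n12) n23)]
    simp only [sqb]
    linear_combination (-((z 1 - z 3)*(z 1 - z 2)*(z 2 - z 3))) *
      (((z 1 - z 0)*lt 1 0)*hkey 1 - ((z 1 - z 0)*lt 1 1)*hkey 0)
  · rw [div_eq_div_iff (mul_ne_zero (mul_ne_zero n32 n31) n12)
      (mul_ne_zero (mul_ne_zero n13 n12) n23)]
    simp only [sqb]
    linear_combination (-((z 1 - z 3)*(z 1 - z 2)*(z 2 - z 3))) *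
      (((z 3 - z 0)*lt 3 1)*hkey 0 - ((z 3 - z 0)*lt 3 0)*hkey 1)
  · rw [div_eq_div_iff (mul_ne_zero (mul_ne_zero n31 n32) n21)
      (mul_ne_zero (mul_ne_zero n13 n12) n23)]
    simp only [sqb]
    ring

/-- With momentum conservation for four massless momenta (`λ_i = (1, z_i)`, indices `0,1,2,3`
standing for `1,2,3,4`), the numerator `[24]⟨12⟩⟨14⟩` is antisymmetric under transpositions of
the indices `2,3,4`, and consequently `[24]⟨12⟩⟨14⟩/(⟨24⟩⟨23⟩⟨34⟩)` is invariant under all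
permutations of `{2,3,4}`. -/
theorem numerator_antisymmetric_and_ratio_symmetric
    (z : Fin 4 → ℂ) (lt : Fin 4 → Fin 2 → ℂ)
    (hne : ∀ i j : Fin 4, i ≠ j → z i ≠ z j)
    (hmom : ∀ α β : Fin 2, ∑ i, (![1, z i] α) * lt i β = 0) :
    -- antisymmetry under the transposition (3 4):
    (sqb (lt 1) (lt 3) * (z 0 - z 1) * (z 0 - z 3)
        = -(sqb (lt 1) (lt 2) * (z 0 - z 1) * (z 0 - z 2)))
    -- antisymmetry under the transposition (2 3):
    ∧ (sqb (lt 1) (lt 3) * (z 0 - z 1) * (z 0 - z 3)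
        = -(sqb (lt 2) (lt 3) * (z 0 - z 2) * (z 0 - z 3)))
    -- antisymmetry under the transposition (2 4):
    ∧ (sqb (lt 1) (lt 3) * (z 0 - z 1) * (z 0 - z 3)
        = -(sqb (lt 3) (lt 1) * (z 0 - z 3) * (z 0 - z 1)))
    -- full S₃-invariance of the ratio [24]⟨12⟩⟨14⟩/(⟨24⟩⟨23⟩⟨34⟩):
    ∧ ∀ σ : Equiv.Perm (Fin 3),
        sqb (lt (Fin.succ (σ 0))) (lt (Fin.succ (σ 2)))
            * (z 0 - z (Fin.succ (σ 0))) * (z 0 - z (Fin.succ (σ 2)))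
          / ((z (Fin.succ (σ 0)) - z (Fin.succ (σ 2)))
              * (z (Fin.succ (σ 0)) - z (Fin.succ (σ 1)))
              * (z (Fin.succ (σ 1)) - z (Fin.succ (σ 2))))
        = sqb (lt 1) (lt 3) * (z 0 - z 1) * (z 0 - z 3)
          / ((z 1 - z 3) * (z 1 - z 2) * (z 2 - z 3)) := by
  have hkey : ∀ β : Fin 2, (z 1 - z 0) * lt 1 β + (z 2 - z 0) * lt 2 β
      + (z 3 - z 0) * lt 3 β = 0 := by
    intro β
    have h0 := hmom 0 β
    have h1 := hmom 1 β
    simp [Fin.sum_univ_four] at h0 h1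
    linear_combination h1 - z 0 * h0
  refine ⟨?_, ?_, ?_, ?_⟩
  · simp only [sqb]
    linear_combination ((z 1 - z 0)*lt 1 0)*hkey 1 - ((z 1 - z 0)*lt 1 1)*hkey 0
  · simp only [sqb]
    linear_combination ((z 3 - z 0)*lt 3 1)*hkey 0 - ((z 3 - z 0)*lt 3 0)*hkey 1
  · simp only [sqb]; ring
  · intro σ
    exact ratio_case z lt hkey
      (sub_ne_zero.mpr (hne 1 2 (by decide)))
      (sub_ne_zero.mpr (hne 1 3 (by decide)))
      (sub_ne_zero.mpr (hne 2 3 (by decide)))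
      (σ 0) (σ 1) (σ 2)
      (σ.injective.ne (by decide)) (σ.injective.ne (by decide))
      (σ.injective.ne (by decide))
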